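/- Let X, Y be Polish spaces with Y bounded metric, let f_n : X → Y and f : X → Y be Borel maps, ν_n, ν ∈ 𝒫(X), and suppose the measures (Id × f_n)_# ν_n converge weakly to (Id × f)_# ν in X × Y. Assume further there is a probability space (W, 𝓕, ℙ) and measurable maps i_n, i : W → X with ν_n = (i_n)_# ℙ, ν = i_# ℙ, and i_n → i ℙ-almost everywhere. Then f_n ∘ i_n converges to f ∘ i in ℙ-probability, i.e. for every ε > 0, ℙ({w : d_Y(f_n(i_n(w)), f(i(w))) > ε}) → 0 as n → ∞. -/

import Mathlib

open MeasureTheory Filter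

open Metric Set
open scoped ENNReal NNReal Topology

lemma aux_modulus {X Y : Type*} [MetricSpace X] [MetricSpace Y] {C : Set (X × Y)}
    (hC : IsCompact C) (hinj : ∀ p ∈ C, ∀ q ∈ C, p.1 = q.1 → p.2 = q.2)
    {ε : ℝ} (hε : 0 < ε) :
    ∃ η > (0:ℝ), ∀ p ∈ C, ∀ q ∈ C, dist p.1 q.1 < η → dist p.2 q.2 < ε := by
  set D : Set ((X × Y) × (X × Y)) :=
    (C ×ˢ C) ∩ {z | ε ≤ dist z.1.2 z.2.2} with hD
  have hDc : IsCompact D :=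
    (hC.prod hC).inter_right
      (isClosed_le continuous_const
        ((continuous_snd.comp continuous_fst).dist (continuous_snd.comp continuous_snd)))
  rcases D.eq_empty_or_nonempty with h | h
  · refine ⟨1, one_pos, fun p hp q hq _ => ?_⟩
    by_contra hcon
    push_neg at hcon
    have : (p, q) ∈ D := ⟨⟨hp, hq⟩, hcon⟩
    rw [h] at this
    exact this
  · obtain ⟨z, hzD, hzmin⟩ := hDc.exists_isMinOn h
      (((continuous_fst.comp continuous_fst).dist
        (continuous_fst.comp continuous_snd)).continuousOn)
    refine ⟨dist z.1.1 z.2.1, ?_, ?_⟩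
    · rcases lt_or_eq_of_le (dist_nonneg (x := z.1.1) (y := z.2.1)) with h' | h'
      · exact h'
      · exfalso
        have he : z.1.1 = z.2.1 := by rw [← dist_eq_zero]; exact h'.symm
        have h2 : z.1.2 = z.2.2 := hinj z.1 hzD.1.1 z.2 hzD.1.2 he
        have h3 : ε ≤ dist z.1.2 z.2.2 := hzD.2
        rw [h2, dist_self] at h3
        linarith
    · intro p hp q hq hlt
      by_contra hcon
      push_neg at hcon
      have hmem : (p, q) ∈ D := ⟨⟨hp, hq⟩, hcon⟩
      have := hzmin hmem
      simp only [mem_setOf_eq] at this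
      exact absurd hlt (not_lt.2 this)

lemma aux_tight {Z : Type*} [TopologicalSpace Z] [PolishSpace Z] [MeasurableSpace Z]
    [BorelSpace Z] (μ : Measure Z) [IsProbabilityMeasure μ] {δ : ℝ≥0∞} (hδ : 0 < δ) :
    ∃ K : Set Z, IsCompact K ∧ μ Kᶜ ≤ δ := by
  letI := TopologicalSpace.upgradeIsCompletelyMetrizable Z
  rcases isEmpty_or_nonempty Z with hZ | hZ
  · exfalso
    have h0 : (1 : ℝ≥0∞) = 0 := by
      rw [← measure_univ (μ := μ), Set.univ_eq_empty_iff.mpr hZ]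
      exact measure_empty
    exact one_ne_zero h0
  obtain ⟨d, hdpos, hdsum⟩ := ENNReal.exists_pos_sum_of_countable hδ.ne' ℕ
  obtain ⟨u, hu⟩ := TopologicalSpace.exists_dense_seq Z
  have key : ∀ n : ℕ, ∃ k : ℕ,
      μ (⋃ i ∈ Finset.range (k+1), closedBall (u i) (1/(n+1)))ᶜ ≤ d n := by
    intro n
    set U : ℕ → Set Z := fun k => ⋃ i ∈ Finset.range (k+1), closedBall (u i) (1/(n+1)) with hU
    have hUclosed : ∀ k, IsClosed (U k) := fun k =>
      isClosed_biUnion_finset (fun i _ => Metric.isClosed_closedBall)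
    have hUmono : Monotone U := fun k l hkl =>
      Set.biUnion_subset_biUnion_left (Finset.coe_subset.2 (Finset.range_subset_range.2 (by omega)))
    have hUcov : ⋃ k, U k = univ := by
      apply eq_univ_of_forall
      intro x
      obtain ⟨j, hj⟩ := Metric.denseRange_iff.1 hu x (1/(n+1)) (by positivity)
      refine mem_iUnion.2 ⟨j, ?_⟩
      refine mem_biUnion (Finset.self_mem_range_succ j) ?_
      rw [mem_closedBall]
      exact hj.le
    have htend : Tendsto (fun k => μ (U k)) atTop (𝓝 1) := by
      have h := tendsto_measure_iUnion_atTop (μ := μ) hUmono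
      rw [hUcov, measure_univ] at h
      exact h
    have hdn0 : (d n : ℝ≥0∞) ≠ 0 := by
      simp [(hdpos n).ne']
    have hlt : (1:ℝ≥0∞) - d n < 1 :=
      ENNReal.sub_lt_self ENNReal.one_ne_top one_ne_zero hdn0
    obtain ⟨k, hk⟩ := (htend.eventually (eventually_gt_nhds hlt)).exists
    refine ⟨k, ?_⟩
    rw [measure_compl (hUclosed k).measurableSet (measure_ne_top μ _), measure_univ,
      tsub_le_iff_right]
    rcases le_or_gt 1 (d n : ℝ≥0∞) with h1 | h1
    · exact le_add_of_le_of_nonneg h1 (zero_le')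
    · calc (1:ℝ≥0∞) = (1 - d n) + d n := (tsub_add_cancel_of_le h1.le).symm
      _ ≤ μ (U k) + d n := add_le_add hk.le le_rfl
      _ = d n + μ (U k) := add_comm _ _
  choose k hk using key
  refine ⟨⋂ n, ⋃ i ∈ Finset.range (k n + 1), closedBall (u i) (1/(n+1)), ?_, ?_⟩
  · apply TotallyBounded.isCompact_of_isClosed
    · rw [Metric.totallyBounded_iff]
      intro ε hε
      obtain ⟨n, hn⟩ := exists_nat_one_div_lt hε
      refine ⟨u '' (Finset.range (k n + 1) : Set ℕ), (Set.toFinite _).image _, ?_⟩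
      intro x hx
      have hx' : x ∈ ⋃ i ∈ Finset.range (k n + 1), closedBall (u i) (1/(n+1)) :=
        mem_iInter.1 hx n
      obtain ⟨j, hj, hxj⟩ := mem_iUnion₂.1 hx'
      refine mem_iUnion₂.2 ⟨u j, ⟨j, by simpa using hj, rfl⟩, ?_⟩
      rw [mem_ball]
      exact lt_of_le_of_lt (mem_closedBall.1 hxj) hn
    · exact isClosed_iInter (fun n => isClosed_biUnion_finset (fun i _ => Metric.isClosed_closedBall))
  · rw [compl_iInter]
    refine le_trans (measure_iUnion_le _) ?_
    exact le_trans (ENNReal.tsum_le_tsum (fun n => hk n)) hdsum.le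

/-- Convergence in probability from weak convergence of measures on graphs,
together with a common Skorokhod representation. -/
theorem stmt1
    {X Y : Type*} [MetricSpace X] [PolishSpace X] [MeasurableSpace X] [BorelSpace X]
    [MetricSpace Y] [PolishSpace Y] [MeasurableSpace Y] [BorelSpace Y]
    (hYbdd : ∀ a b : Y, dist a b ≤ 1)
    (f : ℕ → X → Y) (flim : X → Y)
    (hf : ∀ n, Measurable (f n)) (hflim : Measurable flim)
    (ν : ℕ → Measure X) (νlim : Measure X)
    (hνp : ∀ n, IsProbabilityMeasure (ν n)) (hνlimp : IsProbabilityMeasure νlim)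
    {W : Type*} [MeasurableSpace W] (P : Measure W) [IsProbabilityMeasure P]
    (i : ℕ → W → X) (ilim : W → X)
    (hi : ∀ n, Measurable (i n)) (hilim : Measurable ilim)
    (hνi : ∀ n, ν n = P.map (i n)) (hνlim : νlim = P.map ilim)
    (hae : ∀ᵐ w ∂P, Tendsto (fun n => i n w) atTop (nhds (ilim w)))
    (hweak : ∀ g : BoundedContinuousFunction (X × Y) ℝ,
      Tendsto (fun n => ∫ q, g q ∂((ν n).map (fun x => (x, f n x))))
        atTop (nhds (∫ q, g q ∂(νlim.map (fun x => (x, flim x)))))) :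
    ∀ ε > (0 : ℝ),
      Tendsto (fun n => P {w | ε < dist (f n (i n w)) (flim (ilim w))}) atTop (nhds 0) := by
  intro ε hε
  have hglm : Measurable (fun x => (x, flim x)) := measurable_id.prodMk hflim
  have hgnm : ∀ n, Measurable (fun x => (x, f n x)) := fun n => measurable_id.prodMk (hf n)
  set μ : Measure (X × Y) := νlim.map (fun x => (x, flim x)) with hμdef
  haveI : IsProbabilityMeasure μ := Measure.isProbabilityMeasure_map hglm.aemeasurable
  rw [ENNReal.tendsto_atTop_zero]
  intro ε' hε'
  -- choose a small real δ
  obtain ⟨δ, hδ0, hδ8, hδε'⟩ : ∃ δ : ℝ, 0 < δ ∧ δ < 1/8 ∧ ENNReal.ofReal (8*δ) ≤ ε' := by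
    refine ⟨(min ε' 1).toReal / 16, ?_, ?_, ?_⟩
    · apply div_pos _ (by norm_num)
      apply ENNReal.toReal_pos
      · exact (lt_min hε' zero_lt_one).ne'
      · exact ne_top_of_le_ne_top ENNReal.one_ne_top (min_le_right _ _)
    · have h1 : (min ε' 1).toReal ≤ 1 := by
        rw [← ENNReal.toReal_one]
        exact ENNReal.toReal_mono ENNReal.one_ne_top (min_le_right _ _)
      linarith
    · have h1 : 8 * ((min ε' 1).toReal / 16) ≤ (min ε' 1).toReal := by
        have := ENNReal.toReal_nonneg (a := min ε' 1)
        linarith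
      calc ENNReal.ofReal (8 * ((min ε' 1).toReal / 16)) ≤ ENNReal.ofReal (min ε' 1).toReal :=
            ENNReal.ofReal_le_ofReal h1
      _ = min ε' 1 := ENNReal.ofReal_toReal (ne_top_of_le_ne_top ENNReal.one_ne_top (min_le_right _ _))
      _ ≤ ε' := min_le_left _ _
  -- the graph of flim
  have hS : MeasurableSet {p : X × Y | p.2 = flim p.1} :=
    StronglyMeasurable.measurableSet_eq_fun
      (measurable_snd.stronglyMeasurable) ((hflim.comp measurable_fst).stronglyMeasurable)
  have hμS : μ {p : X × Y | p.2 = flim p.1} = 1 := by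
    rw [hμdef, Measure.map_apply hglm hS]
    have h1 : (fun x => (x, flim x)) ⁻¹' {p : X × Y | p.2 = flim p.1} = univ := by
      ext x; simp
    rw [h1, measure_univ]
  -- a compact subset of the graph of almost full measure
  obtain ⟨T, hTcomp, hTμ⟩ := aux_tight μ (ENNReal.ofReal_pos.2 hδ0)
  obtain ⟨F, hFS, hFclosed, hFμ⟩ :=
    hS.exists_isClosed_lt_add (measure_ne_top μ _) (ENNReal.ofReal_pos.2 hδ0).ne'
  set C : Set (X × Y) := F ∩ T with hCdef
  have hCcomp : IsCompact C := hTcomp.inter_left hFclosed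
  have hCmeas : MeasurableSet C := hCcomp.isClosed.measurableSet
  have hCμ : μ Cᶜ ≤ ENNReal.ofReal (2*δ) := by
    have h1 : μ Fᶜ ≤ ENNReal.ofReal δ := by
      rw [measure_compl hFclosed.measurableSet (measure_ne_top μ _), measure_univ,
        tsub_le_iff_right]
      calc (1:ℝ≥0∞) = μ {p : X × Y | p.2 = flim p.1} := hμS.symm
      _ ≤ μ F + ENNReal.ofReal δ := hFμ.le
      _ = ENNReal.ofReal δ + μ F := add_comm _ _
    calc μ Cᶜ = μ (Fᶜ ∪ Tᶜ) := by rw [hCdef, compl_inter]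
    _ ≤ μ Fᶜ + μ Tᶜ := measure_union_le _ _
    _ ≤ ENNReal.ofReal δ + ENNReal.ofReal δ := add_le_add h1 hTμ
    _ = ENNReal.ofReal (2*δ) := by rw [← ENNReal.ofReal_add hδ0.le hδ0.le]; ring_nf
  have hCne : C.Nonempty := by
    by_contra hcon
    rw [not_nonempty_iff_eq_empty] at hcon
    rw [hcon, compl_empty, measure_univ] at hCμ
    have : ENNReal.ofReal (2*δ) < 1 := ENNReal.ofReal_lt_one.2 (by linarith)
    exact absurd hCμ (not_le.2 this)
  have hinj : ∀ p ∈ C, ∀ q ∈ C, p.1 = q.1 → p.2 = q.2 := by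
    intro p hp q hq he
    have hp2 : p.2 = flim p.1 := hFS hp.1
    have hq2 : q.2 = flim q.1 := hFS hq.1
    rw [hp2, hq2, he]
  -- modulus of continuity
  obtain ⟨η, hη0, hmod⟩ := aux_modulus hCcomp hinj (half_pos hε)
  set r : ℝ := min (η/4) (ε/4) with hrdef
  have hr0 : 0 < r := lt_min (by positivity) (by positivity)
  -- test function
  have hgcont : Continuous (fun p : X × Y => max 0 (1 - infDist p C / r)) :=
    continuous_const.max (continuous_const.sub ((continuous_infDist_pt C).div_const r))
  have hg01 : ∀ p : X × Y, 0 ≤ max 0 (1 - infDist p C / r) ∧ max 0 (1 - infDist p C / r) ≤ 1 := by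
    intro p
    refine ⟨le_max_left _ _, max_le zero_le_one ?_⟩
    have h1 : 0 ≤ infDist p C / r := div_nonneg infDist_nonneg hr0.le
    linarith
  set g : BoundedContinuousFunction (X × Y) ℝ :=
    BoundedContinuousFunction.mkOfBound ⟨fun p => max 0 (1 - infDist p C / r), hgcont⟩ 2
      (fun p q => by
        rw [Real.dist_eq]
        have h1 := hg01 p
        have h2 := hg01 q
        rw [abs_le]
        constructor <;> [skip; skip] <;> simp only [ContinuousMap.coe_mk] <;> linarith) with hgdef
  have hgcoe : ∀ p : X × Y, g p = max 0 (1 - infDist p C / r) := fun p => rfl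
  -- lower bound for the limit integral
  have hL : 1 - 2*δ ≤ ∫ q, g q ∂μ := by
    have h1 : ∫ q in C, g q ∂μ = (μ C).toReal := by
      have heq : ∀ p ∈ C, g p = 1 := by
        intro p hp
        rw [hgcoe, infDist_zero_of_mem hp, zero_div, sub_zero, max_eq_right zero_le_one]
      rw [setIntegral_congr_fun hCmeas heq, setIntegral_const, smul_eq_mul, mul_one]; rfl
    have h2 : ∫ q in C, g q ∂μ ≤ ∫ q, g q ∂μ :=
      setIntegral_le_integral (g.integrable μ) (ae_of_all _ fun p => (hg01 p).1)
    have h3 : 1 - 2*δ ≤ (μ C).toReal := by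
      have h4 : (1:ℝ≥0∞) ≤ μ C + ENNReal.ofReal (2*δ) := by
        calc (1:ℝ≥0∞) = μ C + μ Cᶜ := by rw [measure_add_measure_compl hCmeas, measure_univ]
        _ ≤ μ C + ENNReal.ofReal (2*δ) := add_le_add le_rfl hCμ
      have h5 := ENNReal.toReal_mono
        (by finiteness) h4
      rw [ENNReal.toReal_one, ENNReal.toReal_add (measure_ne_top μ _) ENNReal.ofReal_ne_top,
        ENNReal.toReal_ofReal (by linarith)] at h5
      linarith
    linarith [h1 ▸ h2]
  -- the good sets on X
  set A : ℕ → Set X := fun n => {x | infDist (x, f n x) C ≤ r} with hAdef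
  have hAmeas : ∀ n, MeasurableSet (A n) :=
    fun n => measurableSet_le ((continuous_infDist_pt C).measurable.comp (hgnm n)) measurable_const
  -- eventually ν n (A n)ᶜ is small
  have hev1 : ∀ᶠ n in atTop, ν n (A n)ᶜ ≤ ENNReal.ofReal (3*δ) := by
    have hmargin : ∫ q, g q ∂μ - δ < ∫ q, g q ∂μ := by linarith
    filter_upwards [(hweak g).eventually (eventually_ge_nhds hmargin)] with n hn
    haveI := hνp n
    have hmap : ∫ q, g q ∂((ν n).map (fun x => (x, f n x))) = ∫ x, g (x, f n x) ∂(ν n) :=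
      integral_map (hgnm n).aemeasurable g.continuous.measurable.aestronglyMeasurable
    have hup : ∫ x, g (x, f n x) ∂(ν n) ≤ (ν n (A n)).toReal := by
      have hint : Integrable (fun x => g (x, f n x)) (ν n) :=
        (integrable_map_measure g.continuous.measurable.aestronglyMeasurable
          (hgnm n).aemeasurable).1 (g.integrable _)
      have hle : ∀ x, g (x, f n x) ≤ (A n).indicator (fun _ => (1:ℝ)) x := by
        intro x
        by_cases hx : x ∈ A n
        · rw [indicator_of_mem hx]
          exact (hg01 _).2
        · rw [indicator_of_notMem hx]
          rw [hgcoe]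
          apply max_le le_rfl
          have hx' : r < infDist (x, f n x) C := not_le.1 hx
          have : 1 < infDist (x, f n x) C / r := (one_lt_div hr0).2 hx'
          linarith
      calc ∫ x, g (x, f n x) ∂(ν n) ≤ ∫ x, (A n).indicator (fun _ => (1:ℝ)) x ∂(ν n) :=
            integral_mono hint ((integrable_const (1:ℝ)).indicator (hAmeas n)) hle
      _ = (ν n (A n)).toReal := by
            rw [integral_indicator_const (1:ℝ) (hAmeas n), smul_eq_mul, mul_one]; rfl
    have hAlow : 1 - 3*δ ≤ (ν n (A n)).toReal := by
      have := hn
      rw [hmap] at this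
      linarith
    rw [measure_compl (hAmeas n) (measure_ne_top _ _), measure_univ, tsub_le_iff_right]
    calc (1:ℝ≥0∞) = ENNReal.ofReal ((3*δ) + (1 - 3*δ)) := by rw [add_sub_cancel, ENNReal.ofReal_one]
    _ = ENNReal.ofReal (3*δ) + ENNReal.ofReal (1 - 3*δ) :=
          ENNReal.ofReal_add (by linarith) (by linarith)
    _ ≤ ENNReal.ofReal (3*δ) + ν n (A n) :=
          add_le_add le_rfl (ENNReal.ofReal_le_of_le_toReal hAlow)
  -- eventually the distance between i n and ilim is small in probability
  have hev3 : ∀ᶠ n in atTop, P {w | η/2 ≤ dist (i n w) (ilim w)} ≤ ENNReal.ofReal δ := by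
    have htm : TendstoInMeasure P i atTop ilim :=
      tendstoInMeasure_of_tendsto_ae (fun n => (hi n).aestronglyMeasurable) hae
    exact (tendstoInMeasure_iff_dist.1 htm (η/2) (by positivity)).eventually (eventually_le_nhds (ENNReal.ofReal_pos.2 hδ0))
  -- conclusion
  have hfinal : ∀ᶠ n in atTop, P {w | ε < dist (f n (i n w)) (flim (ilim w))} ≤ ε' := by
    filter_upwards [hev1, hev3] with n h1 h3
    have hsub : {w | ε < dist (f n (i n w)) (flim (ilim w))} ⊆
        (i n ⁻¹' (A n)ᶜ) ∪ (((fun w => (ilim w, flim (ilim w))) ⁻¹' Cᶜ) ∪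
          {w | η/2 ≤ dist (i n w) (ilim w)}) := by
      intro w hw
      by_contra hcon
      simp only [mem_union, not_or, mem_preimage, mem_compl_iff, not_not, mem_setOf_eq,
        not_le] at hcon
      obtain ⟨hwA, hwC, hwd⟩ := hcon
      have hinf : infDist (i n w, f n (i n w)) C < 2*r := lt_of_le_of_lt hwA (by linarith)
      obtain ⟨p, hpC, hpd⟩ := (infDist_lt_iff hCne).1 hinf
      have hd1 : dist (i n w) p.1 < 2*r := by
        refine lt_of_le_of_lt ?_ hpd
        rw [Prod.dist_eq]
        exact le_max_left _ _
      have hd2 : dist (f n (i n w)) p.2 < 2*r := by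
        refine lt_of_le_of_lt ?_ hpd
        rw [Prod.dist_eq]
        exact le_max_right _ _
      have hr1 : 2*r ≤ η/2 := by
        have := min_le_left (η/4) (ε/4)
        rw [← hrdef] at this
        linarith
      have hr2 : 2*r ≤ ε/2 := by
        have := min_le_right (η/4) (ε/4)
        rw [← hrdef] at this
        linarith
      have hpq : dist p.1 (ilim w) < η := by
        calc dist p.1 (ilim w) ≤ dist p.1 (i n w) + dist (i n w) (ilim w) := dist_triangle _ _ _
        _ < 2*r + η/2 := by rw [dist_comm p.1 (i n w)]; exact add_lt_add hd1 hwd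
        _ ≤ η := by linarith
      have hq2 := hmod p hpC (ilim w, flim (ilim w)) hwC hpq
      simp only at hq2
      have : dist (f n (i n w)) (flim (ilim w)) < ε := by
        calc dist (f n (i n w)) (flim (ilim w)) ≤
            dist (f n (i n w)) p.2 + dist p.2 (flim (ilim w)) := dist_triangle _ _ _
        _ < 2*r + ε/2 := add_lt_add hd2 hq2
        _ ≤ ε := by linarith
      rw [mem_setOf_eq] at hw
      linarith
    have hB1 : P (i n ⁻¹' (A n)ᶜ) ≤ ENNReal.ofReal (3*δ) := by
      have : ν n (A n)ᶜ = P (i n ⁻¹' (A n)ᶜ) := by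
        rw [hνi n, Measure.map_apply (hi n) (hAmeas n).compl]
      rwa [this] at h1
    have hB2 : P ((fun w => (ilim w, flim (ilim w))) ⁻¹' Cᶜ) ≤ ENNReal.ofReal (2*δ) := by
      have hmm : μ = P.map (fun w => (ilim w, flim (ilim w))) := by
        rw [hμdef, hνlim, Measure.map_map hglm hilim]
        rfl
      have hgi : Measurable (fun w => (ilim w, flim (ilim w))) := hglm.comp hilim
      have : μ Cᶜ = P ((fun w => (ilim w, flim (ilim w))) ⁻¹' Cᶜ) := by
        rw [hmm, Measure.map_apply hgi hCmeas.compl]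
      rwa [this] at hCμ
    calc P {w | ε < dist (f n (i n w)) (flim (ilim w))} ≤
        P (i n ⁻¹' (A n)ᶜ) + (P ((fun w => (ilim w, flim (ilim w))) ⁻¹' Cᶜ) +
          P {w | η/2 ≤ dist (i n w) (ilim w)}) :=
          le_trans (measure_mono hsub)
            (le_trans (measure_union_le _ _) (add_le_add le_rfl (measure_union_le _ _)))
    _ ≤ ENNReal.ofReal (3*δ) + (ENNReal.ofReal (2*δ) + ENNReal.ofReal δ) :=
          add_le_add hB1 (add_le_add hB2 h3)
    _ = ENNReal.ofReal (6*δ) := by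
          rw [← ENNReal.ofReal_add (by linarith) hδ0.le, ← ENNReal.ofReal_add (by linarith)
            (by linarith)]
          ring_nf
    _ ≤ ENNReal.ofReal (8*δ) := ENNReal.ofReal_le_ofReal (by linarith)
    _ ≤ ε' := hδε'
  exact eventually_atTop.1 hfinal
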